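/- Let n ≥ 1 and a ≥ 0 be integers. The exponent of Φ_{2·3^a}(x) in G_T(n,x) (the largest k such that Φ_{2·3^a}(x)^k divides G_T(n,x) in ℤ[x]) equals Σ_{k>a} ⌊n/3^k⌋; consequently, for every ternary partition λ of n, the exponent of Φ_{2·3^a}(x) in h_{T,λ}(x)/G_T(n,x) equals ⌊n/3^a⌋ − Σ_{k≥a} m_λ(3^k). -/

import Mathlib

open Polynomial Finset
open scoped Classical

/-- The ternary partitions of `n`: partitions of `n` all of whose parts are powers of `3`. -/
noncomputable def terParts (n : ℕ) : Finset (Nat.Partition n) :=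
  Finset.univ.filter (fun μ => ∀ i ∈ μ.parts, ∃ k : ℕ, i = 3 ^ k)

/-- `h_{T,λ}(x) = ∏_{k ≥ 0, 3^k ≤ n} (1+x^{3^k})^(⌊n/3^k⌋ - m_λ(3^k))` in `ℤ[x]`. -/
noncomputable def hT (n : ℕ) (μ : Nat.Partition n) : Polynomial ℤ :=
  ∏ k ∈ (Finset.range (n + 1)).filter (fun k => 3 ^ k ≤ n),
    (1 + X ^ (3 ^ k)) ^ (n / 3 ^ k - μ.parts.count (3 ^ k))

/-- `G_T(n,x)`: the (normalized) gcd of the `h_{T,λ}(x)` over ternary partitions `λ` of `n`. -/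
noncomputable def GT (n : ℕ) : Polynomial ℤ :=
  (terParts n).gcd (hT n)

theorem GT_dvd_sum (n : ℕ) :
    ∃ q : Polynomial ℤ, (∑ μ ∈ terParts n, hT n μ) = GT n * q :=
  exists_eq_mul_right_of_dvd (Finset.dvd_sum fun _ hμ => Finset.gcd_dvd hμ)

/-- `num_T(n,x) = (∑_{λ ternary partition of n} h_{T,λ}(x)) / G_T(n,x)`. -/
noncomputable def numT (n : ℕ) : Polynomial ℤ :=
  (GT_dvd_sum n).choose


-- Φ_2 Φ_6 Φ_18 ... product
lemma prodCyc (k : ℕ) :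
    ∏ j ∈ Finset.range (k + 1), cyclotomic (2 * 3 ^ j) ℤ = 1 + X ^ (3 ^ k) := by
  induction k with
  | zero => simp [cyclotomic_two, add_comm]
  | succ k ih =>
      have h3 : Nat.Prime 3 := by norm_num
      have hexp : ∀ j : ℕ, cyclotomic (2 * 3 ^ (j + 1)) ℤ
          = expand ℤ (3 ^ j) (cyclotomic 6 ℤ) := by
        intro j
        induction j with
        | zero => simp [expand_one]
        | succ j ihj =>
            have hdvd : (3 : ℕ) ∣ 2 * 3 ^ (j + 1) := by
              exact Dvd.dvd.mul_left (dvd_pow_self 3 (Nat.succ_ne_zero j)) 2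
            have := cyclotomic_expand_eq_cyclotomic h3 hdvd ℤ
            rw [show 2 * 3 ^ (j+1) * 3 = 2 * 3 ^ (j+2) by ring] at this
            rw [← this, ihj, expand_expand]
            ring_nf
      have h6 : cyclotomic 6 ℤ * cyclotomic 2 ℤ = expand ℤ 3 (cyclotomic 2 ℤ) := by
        have := cyclotomic_expand_eq_cyclotomic_mul h3 (by norm_num : ¬ (3:ℕ) ∣ 2) ℤ
        rw [show (2 * 3 : ℕ) = 6 by norm_num] at this
        exact this.symm
      rw [Finset.prod_range_succ, ih, hexp k]
      have : (1 + X ^ 3 ^ k) * expand ℤ (3 ^ k) (cyclotomic 6 ℤ)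
          = expand ℤ (3 ^ k) ((1 + X) * cyclotomic 6 ℤ) := by
        rw [map_mul, map_add, map_one, expand_X]
      rw [this]
      have h2 : (1 + X : Polynomial ℤ) = cyclotomic 2 ℤ := by
        rw [cyclotomic_two]; ring
      rw [h2, mul_comm, h6]
      rw [cyclotomic_two, map_add, map_one, expand_X, map_add, map_one, map_pow, expand_X,
        ← pow_mul, ← pow_succ, add_comm]

lemma primeCyc (m : ℕ) (hm : 0 < m) : Prime (cyclotomic m ℤ) :=
  UniqueFactorizationMonoid.irreducible_iff_prime.mp (cyclotomic.irreducible hm)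

lemma cycNotDvd {a j : ℕ} (h : a ≠ j) :
    ¬ cyclotomic (2 * 3 ^ a) ℤ ∣ cyclotomic (2 * 3 ^ j) ℤ := by
  intro hdvd
  have h1 : (0:ℕ) < 2 * 3 ^ a := by positivity
  have h2 : (0:ℕ) < 2 * 3 ^ j := by positivity
  have hass := (cyclotomic.irreducible h1).associated_of_dvd (cyclotomic.irreducible h2) hdvd
  have heq := Polynomial.eq_of_monic_of_associated (cyclotomic.monic _ _) (cyclotomic.monic _ _) hass
  have := cyclotomic_injective (R := ℤ) heq
  have : (3:ℕ) ^ a = 3 ^ j := by omega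
  exact h (Nat.pow_right_injective (by norm_num) this)

lemma oneAddFact (a k : ℕ) :
    ∃ v : Polynomial ℤ, ¬ cyclotomic (2 * 3 ^ a) ℤ ∣ v ∧
      (1 + X ^ (3 ^ k) : Polynomial ℤ)
        = cyclotomic (2 * 3 ^ a) ℤ ^ (if a ≤ k then 1 else 0) * v := by
  set p := cyclotomic (2 * 3 ^ a) ℤ with hp
  have hprime : Prime p := primeCyc _ (by positivity)
  by_cases hak : a ≤ k
  · refine ⟨∏ j ∈ (Finset.range (k+1)).erase a, cyclotomic (2 * 3 ^ j) ℤ, ?_, ?_⟩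
    · intro hdvd
      obtain ⟨j, hj, hdj⟩ := (hprime.dvd_finset_prod_iff _).mp hdvd
      exact cycNotDvd (Finset.ne_of_mem_erase hj).symm.symm |>.elim (by
        exact absurd hdj (cycNotDvd (Ne.symm (Finset.ne_of_mem_erase hj))))
    · rw [if_pos hak, pow_one, ← prodCyc k]
      exact (Finset.mul_prod_erase _ _ (Finset.mem_range.mpr (by omega))).symm
  · refine ⟨∏ j ∈ Finset.range (k+1), cyclotomic (2 * 3 ^ j) ℤ, ?_, ?_⟩
    · intro hdvd
      obtain ⟨j, hj, hdj⟩ := (hprime.dvd_finset_prod_iff _).mp hdvd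
      have : a ≠ j := by have := Finset.mem_range.mp hj; omega
      exact cycNotDvd this hdj
    · rw [if_neg hak, pow_zero, one_mul, prodCyc]

lemma prodFactor {p : Polynomial ℤ} (hp : Prime p) (S : Finset ℕ)
    (f : ℕ → Polynomial ℤ) (d e : ℕ → ℕ)
    (h : ∀ k ∈ S, ∃ v, ¬ p ∣ v ∧ f k = p ^ d k * v) :
    ∃ U, ¬ p ∣ U ∧ ∏ k ∈ S, f k ^ e k = p ^ (∑ k ∈ S, d k * e k) * U := by
  classical
  induction S using Finset.induction_on with
  | empty => exact ⟨1, fun hd => hp.not_unit (isUnit_of_dvd_one hd), by simp⟩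
  | insert b S' hnotmem ih =>
      obtain ⟨U, hU, hEq⟩ := ih (fun k hk => h k (Finset.mem_insert_of_mem hk))
      obtain ⟨v, hv, hfv⟩ := h b (Finset.mem_insert_self _ _)
      refine ⟨v ^ e b * U, ?_, ?_⟩
      · intro hd
        rcases hp.dvd_mul.mp hd with h1 | h1
        · exact hv (hp.dvd_of_dvd_pow h1)
        · exact hU h1
      · rw [Finset.prod_insert hnotmem, Finset.sum_insert hnotmem, hEq, hfv,
          mul_pow, ← pow_mul, pow_add]
        ring

lemma dvdPowIff {p f u : Polynomial ℤ} (hp : Prime p) {e : ℕ}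
    (hf : f = p ^ e * u) (hu : ¬ p ∣ u) (t : ℕ) : p ^ t ∣ f ↔ t ≤ e := by
  constructor
  · intro hd
    by_contra hlt
    push_neg at hlt
    have h1 : p ^ (e + 1) ∣ f := dvd_trans (pow_dvd_pow p hlt) hd
    rw [hf, pow_succ] at h1
    have h2 : p ^ e * p ∣ p ^ e * u := h1
    have := (mul_dvd_mul_iff_left (pow_ne_zero e hp.ne_zero)).mp h2
    exact hu this
  · intro ht
    exact dvd_trans (pow_dvd_pow p ht) ⟨u, hf⟩

lemma sumCountMul (s : Multiset ℕ) : ∑ a ∈ s.toFinset, s.count a * a = s.sum := by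
  conv_rhs => rw [← Multiset.toFinset_sum_count_nsmul_eq s]
  rw [← Multiset.coe_sumAddMonoidHom, map_sum]
  simp [Multiset.sum_nsmul]

lemma countZeroOfGt {n : ℕ} (μ : Nat.Partition n) {i : ℕ} (hi : n < i) :
    μ.parts.count i = 0 := by
  rw [Multiset.count_eq_zero]
  intro hmem
  have := Multiset.single_le_sum (fun x _ => Nat.zero_le x) i hmem
  rw [μ.parts_sum] at this
  omega

lemma sumCountLe (n a : ℕ) (μ : Nat.Partition n) :
    ∑ k ∈ Finset.Icc a n, μ.parts.count (3 ^ k) ≤ n / 3 ^ a := by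
  have hinj : Function.Injective (fun k : ℕ => 3 ^ k) :=
    fun x y h => Nat.pow_right_injective (by norm_num) h
  have h1 : ∑ k ∈ Finset.Icc a n, μ.parts.count (3 ^ k) * 3 ^ k ≤ n := by
    have himg : ∑ k ∈ Finset.Icc a n, μ.parts.count (3 ^ k) * 3 ^ k
        = ∑ i ∈ (Finset.Icc a n).image (fun k => 3 ^ k), μ.parts.count i * i := by
      rw [Finset.sum_image (fun x _ y _ h => hinj h)]
    have hsub : ∑ i ∈ (Finset.Icc a n).image (fun k => 3 ^ k), μ.parts.count i * i
        = ∑ i ∈ ((Finset.Icc a n).image (fun k => 3 ^ k)) ∩ μ.parts.toFinset,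
            μ.parts.count i * i := by
      refine (Finset.sum_subset (Finset.inter_subset_left) ?_).symm
      intro x hx hnx
      have : x ∉ μ.parts.toFinset := fun hmem => hnx (Finset.mem_inter.mpr ⟨hx, hmem⟩)
      rw [Multiset.count_eq_zero_of_notMem (fun h => this (Multiset.mem_toFinset.mpr h))]
      ring
    have hle : ∑ i ∈ ((Finset.Icc a n).image (fun k => 3 ^ k)) ∩ μ.parts.toFinset,
          μ.parts.count i * i ≤ ∑ i ∈ μ.parts.toFinset, μ.parts.count i * i :=
      Finset.sum_le_sum_of_subset Finset.inter_subset_right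
    rw [himg, hsub]
    calc _ ≤ ∑ i ∈ μ.parts.toFinset, μ.parts.count i * i := hle
    _ = n := by rw [sumCountMul, μ.parts_sum]
  have h2 : (∑ k ∈ Finset.Icc a n, μ.parts.count (3 ^ k)) * 3 ^ a
      ≤ ∑ k ∈ Finset.Icc a n, μ.parts.count (3 ^ k) * 3 ^ k := by
    rw [Finset.sum_mul]
    refine Finset.sum_le_sum fun k hk => ?_
    exact Nat.mul_le_mul_left _ (Nat.pow_le_pow_right (by norm_num) (Finset.mem_Icc.mp hk).1)
  exact (Nat.le_div_iff_mul_le (by positivity)).mpr (le_trans h2 h1)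

lemma countLeDiv (n k : ℕ) (μ : Nat.Partition n) (hk : 3 ^ k ≤ n) :
    μ.parts.count (3 ^ k) ≤ n / 3 ^ k := by
  have hkn : k ≤ n := le_trans (Nat.le_of_lt (Nat.lt_pow_self (by norm_num : 1 < 3) : k < 3 ^ k)) hk
  calc μ.parts.count (3 ^ k) ≤ ∑ j ∈ Finset.Icc k n, μ.parts.count (3 ^ j) :=
        Finset.single_le_sum (f := fun j => μ.parts.count (3 ^ j)) (fun j _ => Nat.zero_le _) (Finset.mem_Icc.mpr ⟨le_refl k, hkn⟩)
  _ ≤ n / 3 ^ k := sumCountLe n k μ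

lemma hTFact (n a : ℕ) (μ : Nat.Partition n) :
    ∃ U : Polynomial ℤ, ¬ cyclotomic (2 * 3 ^ a) ℤ ∣ U ∧
      hT n μ
        = cyclotomic (2 * 3 ^ a) ℤ
            ^ (∑ k ∈ Finset.Icc a n, (n / 3 ^ k - μ.parts.count (3 ^ k))) * U := by
  have hp : Prime (cyclotomic (2 * 3 ^ a) ℤ) := primeCyc _ (by positivity)
  obtain ⟨U, hU, hEq⟩ := prodFactor hp ((Finset.range (n + 1)).filter (fun k => 3 ^ k ≤ n))
    (fun k => 1 + X ^ (3 ^ k)) (fun k => if a ≤ k then 1 else 0)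
    (fun k => n / 3 ^ k - μ.parts.count (3 ^ k)) (fun k _ => oneAddFact a k)
  refine ⟨U, hU, hEq.trans ?_⟩
  congr 1
  congr 1
  simp only [ite_mul, one_mul, zero_mul]
  rw [← Finset.sum_filter]
  refine Finset.sum_subset ?_ ?_
  · intro k hk
    simp only [Finset.mem_filter, Finset.mem_range] at hk
    refine Finset.mem_Icc.mpr ⟨hk.2, ?_⟩
    exact le_trans (Nat.le_of_lt (Nat.lt_pow_self (by norm_num : 1 < 3) : k < 3 ^ k)) hk.1.2
  · intro k hk hnk
    have hak := (Finset.mem_Icc.mp hk).1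
    have hkn := (Finset.mem_Icc.mp hk).2
    have h3 : ¬ 3 ^ k ≤ n := by
      intro hle
      exact hnk (Finset.mem_filter.mpr ⟨Finset.mem_filter.mpr
        ⟨Finset.mem_range.mpr (by omega), hle⟩, hak⟩)
    rw [Nat.div_eq_of_lt (by omega)]
    omega

lemma divSplit (n a : ℕ) :
    ∑ k ∈ Finset.Icc a n, n / 3 ^ k = n / 3 ^ a + ∑ k ∈ Finset.Icc (a + 1) n, n / 3 ^ k := by
  by_cases h : a ≤ n
  · rw [← Finset.Ioc_insert_left h, Finset.sum_insert (by simp), Finset.Icc_add_one_left_eq_Ioc]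
  · have h1 : Finset.Icc a n = ∅ := Finset.Icc_eq_empty (by omega)
    have h2 : Finset.Icc (a + 1) n = ∅ := Finset.Icc_eq_empty (by omega)
    have h3 : n / 3 ^ a = 0 := Nat.div_eq_of_lt (by
      have := (Nat.lt_pow_self (show 1 < 3 by norm_num) : a < 3 ^ a); omega)
    rw [h1, h2, h3]; simp

lemma Edecomp (n a : ℕ) (μ : Nat.Partition n) :
    ∑ k ∈ Finset.Icc a n, (n / 3 ^ k - μ.parts.count (3 ^ k))
      = (∑ k ∈ Finset.Icc a n, n / 3 ^ k) - ∑ k ∈ Finset.Icc a n, μ.parts.count (3 ^ k) := by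
  refine Finset.sum_tsub_distrib _ fun k _ => ?_
  by_cases hk : 3 ^ k ≤ n
  · exact countLeDiv n k μ hk
  · rw [countZeroOfGt μ (by omega)]
    exact Nat.zero_le _

def mu0 (n a : ℕ) : Nat.Partition n where
  parts := Multiset.replicate (n / 3 ^ a) (3 ^ a) + Multiset.replicate (n % 3 ^ a) 1
  parts_pos := by
    intro i hi
    rcases Multiset.mem_add.mp hi with h | h <;>
      rw [Multiset.eq_of_mem_replicate h] <;> positivity
  parts_sum := by
    rw [Multiset.sum_add, Multiset.sum_replicate, Multiset.sum_replicate, smul_eq_mul,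
      smul_eq_mul, mul_one, mul_comm]
    exact Nat.div_add_mod n (3 ^ a)

lemma mu0_count_sum (n a : ℕ) :
    ∑ k ∈ Finset.Icc a n, (mu0 n a).parts.count (3 ^ k) = n / 3 ^ a := by
  by_cases han : a ≤ n
  · have hcount : ∀ k : ℕ, (mu0 n a).parts.count (3 ^ k)
        = (if 3 ^ a = 3 ^ k then n / 3 ^ a else 0) + (if 1 = 3 ^ k then n % 3 ^ a else 0) := by
      intro k
      simp [mu0, Multiset.count_replicate]
    rcases Nat.eq_zero_or_pos a with ha0 | hapos
    · subst ha0
      have : ∀ k ∈ Finset.Icc 0 n, (mu0 n 0).parts.count (3 ^ k)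
          = if k = 0 then n else 0 := by
        intro k _
        rw [hcount k]
        rcases Nat.eq_zero_or_pos k with h | h
        · subst h; simp [Nat.mod_one]
        · have h1 : (1:ℕ) < 3 ^ k := Nat.one_lt_pow (by omega) (by norm_num)
          rw [if_neg (by omega), if_neg (by omega), if_neg (by omega)]
      rw [Finset.sum_congr rfl this, Finset.sum_ite_eq' (Finset.Icc 0 n) 0 (fun _ => n)]
      simp [han]
    · have : ∀ k ∈ Finset.Icc a n, (mu0 n a).parts.count (3 ^ k)
          = if k = a then n / 3 ^ a else 0 := by
        intro k hk
        have hka := (Finset.mem_Icc.mp hk).1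
        have h1 : (1:ℕ) < 3 ^ k := Nat.one_lt_pow (by omega) (by norm_num)
        rw [hcount k]
        by_cases hke : k = a
        · subst hke
          rw [if_pos rfl, if_neg (by omega), if_pos rfl, add_zero]
        · rw [if_neg (fun h => hke ((Nat.pow_right_injective (by norm_num) h).symm)),
            if_neg (by omega), if_neg hke, add_zero]
      rw [Finset.sum_congr rfl this, Finset.sum_ite_eq' (Finset.Icc a n) a (fun _ => n / 3 ^ a)]
      simp [han]
  · have h1 : Finset.Icc a n = ∅ := Finset.Icc_eq_empty (by omega)
    have h3 : n / 3 ^ a = 0 := Nat.div_eq_of_lt (by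
      have := (Nat.lt_pow_self (show 1 < 3 by norm_num) : a < 3 ^ a); omega)
    rw [h1, h3]; simp

lemma mu0_mem (n a : ℕ) : mu0 n a ∈ terParts n := by
  refine Finset.mem_filter.mpr ⟨Finset.mem_univ _, ?_⟩
  intro i hi
  rcases Multiset.mem_add.mp hi with h | h
  · exact ⟨a, Multiset.eq_of_mem_replicate h⟩
  · exact ⟨0, by rw [Multiset.eq_of_mem_replicate h, pow_zero]⟩

/-- Let `n ≥ 1` and `a ≥ 0`.  The exponent of `Φ_{2·3^a}(x)` in `G_T(n,x)` (the largest `k`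
such that `Φ_{2·3^a}(x)^k` divides `G_T(n,x)` in `ℤ[x]`) equals `Σ_{k>a} ⌊n/3^k⌋`;
consequently, for every ternary partition `λ` of `n`, the exponent of `Φ_{2·3^a}(x)` in
`h_{T,λ}(x)/G_T(n,x)` equals `⌊n/3^a⌋ − Σ_{k≥a} m_λ(3^k)`.
(The sums over `k` are truncated at `k = n`, since the omitted terms vanish; the quotient
`q` is characterized by `h_{T,λ} = G_T(n,x)·q`.) -/
theorem exponent_of_cyclotomic_in_GT (n a : ℕ) (hn : 1 ≤ n) :
    (Polynomial.cyclotomic (2 * 3 ^ a) ℤ ^ (∑ k ∈ Finset.Icc (a + 1) n, n / 3 ^ k) ∣ GT n ∧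
      ¬ Polynomial.cyclotomic (2 * 3 ^ a) ℤ ^
          ((∑ k ∈ Finset.Icc (a + 1) n, n / 3 ^ k) + 1) ∣ GT n) ∧
    ∀ μ ∈ terParts n, ∀ q : Polynomial ℤ, hT n μ = GT n * q →
      ∃ m : ℕ,
        (m : ℤ) = (n / 3 ^ a : ℕ) -
            ∑ k ∈ Finset.Icc a n, (μ.parts.count (3 ^ k) : ℤ) ∧
        Polynomial.cyclotomic (2 * 3 ^ a) ℤ ^ m ∣ q ∧
        ¬ Polynomial.cyclotomic (2 * 3 ^ a) ℤ ^ (m + 1) ∣ q := by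
  have hp : Prime (cyclotomic (2 * 3 ^ a) ℤ) := primeCyc _ (by positivity)
  set p := cyclotomic (2 * 3 ^ a) ℤ with hpdef
  set T := ∑ k ∈ Finset.Icc (a + 1) n, n / 3 ^ k with hT_def
  have hD := divSplit n a
  -- part (1): p ^ T ∣ GT n
  have h1 : p ^ T ∣ GT n := by
    refine Finset.dvd_gcd fun μ hμ => ?_
    obtain ⟨U, hU, hEq⟩ := hTFact n a μ
    have hC := sumCountLe n a μ
    have hE := Edecomp n a μ
    refine (dvdPowIff hp hEq hU T).mpr ?_
    omega
  -- part (2): ¬ p ^ (T + 1) ∣ GT n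
  have h2 : ¬ p ^ (T + 1) ∣ GT n := by
    intro hd
    obtain ⟨U, hU, hEq⟩ := hTFact n a (mu0 n a)
    have hE := Edecomp n a (mu0 n a)
    rw [mu0_count_sum n a] at hE
    have hdvd : p ^ (T + 1) ∣ hT n (mu0 n a) := hd.trans (Finset.gcd_dvd (mu0_mem n a))
    have := (dvdPowIff hp hEq hU (T + 1)).mp hdvd
    omega
  refine ⟨⟨h1, h2⟩, ?_⟩
  intro μ hμ q hq
  obtain ⟨U, hU, hEq⟩ := hTFact n a μ
  have hC := sumCountLe n a μ
  have hE := Edecomp n a μ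
  set C := ∑ k ∈ Finset.Icc a n, μ.parts.count (3 ^ k) with hC_def
  set E := ∑ k ∈ Finset.Icc a n, (n / 3 ^ k - μ.parts.count (3 ^ k)) with hE_def
  refine ⟨n / 3 ^ a - C, ?_, ?_, ?_⟩
  · have hcast : ∑ k ∈ Finset.Icc a n, (μ.parts.count (3 ^ k) : ℤ) = (C : ℤ) := by
      rw [hC_def]; push_cast; rfl
    rw [hcast]
    omega
  · -- p ^ m ∣ q
    obtain ⟨g, hg⟩ := h1
    have hpg : ¬ p ∣ g := by
      intro hpg
      obtain ⟨g', hg'⟩ := hpg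
      exact h2 ⟨g', by rw [hg, hg', pow_succ]; ring⟩
    have hET : E = T + (n / 3 ^ a - C) := by omega
    have hcancel : g * q = p ^ (n / 3 ^ a - C) * U := by
      have hh : p ^ T * (g * q) = p ^ T * (p ^ (n / 3 ^ a - C) * U) := by
        rw [← mul_assoc, ← hg, ← hq, hEq, hET, pow_add]
        ring
      exact mul_left_cancel₀ (pow_ne_zero T hp.ne_zero) hh
    refine hp.pow_dvd_of_dvd_mul_left _ hpg ?_
    rw [hcancel]
    exact Dvd.intro U rfl
  · -- ¬ p ^ (m + 1) ∣ q
    intro hd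
    have hET : T + (n / 3 ^ a - C + 1) = E + 1 := by omega
    have hdvd : p ^ (E + 1) ∣ hT n μ := by
      rw [hq, ← hET, pow_add]
      exact mul_dvd_mul h1 hd
    have := (dvdPowIff hp hEq hU (E + 1)).mp hdvd
    omega
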